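/- Let K be a field of characteristic p > 0 containing a primitive mn-th root of unity ζ_{mn} with m, n ≥ 2 and mn prime to p; set ζ = (ζ_{mn})^m. Let a ∈ K* have class of order n in K*/(K*)^n, let L = K[X]/(X^n − a), θ the class of X, and θ_k = 1/(ζ^{−k}θ − 1) for k ∈ Z/nZ, so Θ = (θ_k)_k is a normal basis of L/K. Let ī ∈ K^{Z/nZ} be the coordinate vector of θ_0^2 in Θ. Set R = ζ_{mn}, u_R = ((Rζ^k − 1)^{−1})_{k ∈ Z/nZ} and w_R = ((Rζ^k − 1)^{−2})_{k ∈ Z/nZ}; let u_R^{−1} be the inverse of u_R for the convolution product. Then for all vectors α, β ∈ K^{Z/nZ}, the coordinate vector in Θ of the product (Σ_i α_i θ_i) · (Σ_j β_j θ_j) equals ī ⋆ (α ⋄ β) + u_R^{−1} ⋆ ( (u_R ⋆ α) ⋄ (u_R ⋆ β) − w_R ⋆ (α ⋄ β) ). -/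

import Mathlib

open Polynomial

/-- The convolution product of two vectors indexed by `Z/nZ`. -/
noncomputable def conv {K : Type*} [CommRing K] {n : ℕ} [NeZero n]
    (α β : ZMod n → K) : ZMod n → K :=
  fun k => ∑ i : ZMod n, α i * β (k - i)

section Conv
variable {K : Type*} [CommRing K] {n : ℕ} [NeZero n]


lemma conv_comm (α β : ZMod n → K) : conv α β = conv β α := by
  funext k
  unfold conv
  refine Fintype.sum_equiv (Equiv.subLeft k) _ _ fun i => ?_
  simp [Equiv.subLeft, mul_comm]

lemma conv_assoc (a b c : ZMod n → K) : conv (conv a b) c = conv a (conv b c) := by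
  funext k
  unfold conv
  simp_rw [Finset.sum_mul, Finset.mul_sum]
  rw [Finset.sum_comm]
  refine Finset.sum_congr rfl fun i _ => ?_
  refine Fintype.sum_equiv (Equiv.subRight i) _ _ fun j => ?_
  simp only [Equiv.subRight_apply]
  rw [mul_assoc]
  congr 2
  abel

lemma conv_delta (x : ZMod n → K) :
    conv (fun k => if k = 0 then (1 : K) else 0) x = x := by
  funext k
  unfold conv
  rw [Finset.sum_eq_single 0] <;> simp +contextual

lemma conv_inv_cancel {u v : ZMod n → K}
    (h : conv u v = (fun k => if k = 0 then 1 else 0)) (x : ZMod n → K) :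
    conv v (conv u x) = x := by
  rw [← conv_assoc, conv_comm v u, h, conv_delta]

end Conv

section ZP
variable {K : Type*} [Field K] {n : ℕ} [NeZero n]

/-- `z ^ x.val` for `x : ZMod n`. -/
def zp (z : K) (x : ZMod n) : K := z ^ x.val

lemma zp_add {z : K} (hz1 : z ^ n = 1) (x y : ZMod n) :
    zp z (x + y) = zp z x * zp z y := by
  unfold zp
  rw [ZMod.val_add, ← pow_eq_pow_mod _ hz1, pow_add]

lemma zp_ne {z : K} (hz0 : z ≠ 0) (x : ZMod n) : zp z x ≠ 0 := pow_ne_zero _ hz0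

lemma zp_ne_one {z : K} (hz : IsPrimitiveRoot z n) {x : ZMod n} (hx : x ≠ 0) :
    zp z x ≠ 1 := by
  refine hz.pow_ne_one_of_pos_of_lt ?_ (ZMod.val_lt x)
  exact (fun h => hx ((ZMod.val_eq_zero x).mp h))

lemma zp_pow_n {z : K} (hz1 : z ^ n = 1) (x : ZMod n) : (zp z x) ^ n = 1 := by
  unfold zp
  rw [← pow_mul, mul_comm, pow_mul, hz1, one_pow]

end ZP

lemma core {K : Type*} [Field K] {m n : ℕ} [NeZero n] (hm : 2 ≤ m) (hn : 2 ≤ n)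
    {ζ : K} (hζ : IsPrimitiveRoot ζ (m * n))
    {L : Type*} [Field L] [Algebra K L] {a : K} (θ : L)
    (hθpow : θ ^ n = algebraMap K L a)
    (hθK : ∀ w : K, θ ≠ algebraMap K L w)
    (lift : ∀ c : K, c ^ n = 1 → { τ : L →ₐ[K] L // τ θ = algebraMap K L c * θ })
    (Θ : ZMod n → L)
    (hΘ : ∀ k : ZMod n, Θ k = (algebraMap K L (((ζ ^ m)⁻¹) ^ k.val) * θ - 1)⁻¹)
    (B : Module.Basis (ZMod n) K L) (hB : ∀ k : ZMod n, B k = Θ k)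
    (ii : ZMod n → K) (hii : ∀ k : ZMod n, ii k = B.repr (Θ 0 ^ 2) k)
    (uR wR : ZMod n → K)
    (huR : ∀ k : ZMod n, uR k = (ζ * (ζ ^ m) ^ k.val - 1)⁻¹)
    (hwR : ∀ k : ZMod n, wR k = (ζ * (ζ ^ m) ^ k.val - 1)⁻¹ ^ 2)
    (uRinv : ZMod n → K)
    (huRinv : conv uR uRinv = (fun k => if k = 0 then 1 else 0))
    (α β : ZMod n → K) (k : ZMod n) :
    B.repr ((∑ i : ZMod n, α i • Θ i) * (∑ j : ZMod n, β j • Θ j)) k =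
      conv ii (α * β) k +
        conv uRinv (conv uR α * conv uR β - conv wR (α * β)) k := by
  have hn0 : 0 < n := by omega
  have hmn : 0 < m * n := by positivity
  have hz : IsPrimitiveRoot (ζ ^ m) n := hζ.pow hmn rfl
  have hz1 : (ζ ^ m) ^ n = 1 := hz.pow_eq_one
  have hζ0 : ζ ≠ 0 := hζ.ne_zero hmn.ne'
  have hz0 : (ζ ^ m) ≠ 0 := pow_ne_zero _ hζ0
  have hzp_sub_ne : ∀ x : ZMod n, x ≠ 0 → zp (ζ ^ m) x - 1 ≠ 0 := by
    intro x hx h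
    exact zp_ne_one hz hx (sub_eq_zero.mp h)
  -- the denominators
  have hΘ' : ∀ s : ZMod n, Θ s = (algebraMap K L ((zp (ζ ^ m) s)⁻¹) * θ - 1)⁻¹ := by
    intro s
    rw [hΘ s, inv_pow]
    rfl
  have hd0 : ∀ s : ZMod n, algebraMap K L ((zp (ζ ^ m) s)⁻¹) * θ - 1 ≠ 0 := by
    intro s h
    have h1 : algebraMap K L ((zp (ζ ^ m) s)⁻¹) * θ = 1 := by
      have := sub_eq_zero.mp h
      simpa using this
    apply hθK (zp (ζ ^ m) s)
    calc θ = algebraMap K L (zp (ζ ^ m) s) * (algebraMap K L ((zp (ζ ^ m) s)⁻¹) * θ) := by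
            rw [← mul_assoc, ← map_mul, mul_inv_cancel₀ (zp_ne hz0 s), map_one, one_mul]
      _ = algebraMap K L (zp (ζ ^ m) s) := by rw [h1, mul_one]
  have hΘd : ∀ s : ZMod n, Θ s * (algebraMap K L ((zp (ζ ^ m) s)⁻¹) * θ - 1) = 1 := fun s => by
    rw [hΘ']; exact inv_mul_cancel₀ (hd0 s)
  -- off-diagonal element identity
  have hOff : ∀ i j : ZMod n, i ≠ j →
      Θ i * Θ j = (zp (ζ ^ m) (i - j) - 1)⁻¹ • Θ i -
        ((zp (ζ ^ m) (i - j) - 1)⁻¹ * zp (ζ ^ m) (i - j)) • Θ j := by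
    intro i j hij
    have hij0 : i - j ≠ 0 := sub_ne_zero.mpr hij
    have ht1 : zp (ζ ^ m) (i - j) - 1 ≠ 0 := hzp_sub_ne _ hij0
    have key : algebraMap K L (zp (ζ ^ m) (i - j) - 1) * (Θ i * Θ j)
        = Θ i - algebraMap K L (zp (ζ ^ m) (i - j)) * Θ j := by
      apply mul_right_cancel₀ (mul_ne_zero (hd0 i) (hd0 j))
      have e1 : algebraMap K L (zp (ζ ^ m) (i - j) - 1) * (Θ i * Θ j) *
          ((algebraMap K L ((zp (ζ ^ m) i)⁻¹) * θ - 1) * (algebraMap K L ((zp (ζ ^ m) j)⁻¹) * θ - 1))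
          = algebraMap K L (zp (ζ ^ m) (i - j) - 1) *
            ((Θ i * (algebraMap K L ((zp (ζ ^ m) i)⁻¹) * θ - 1)) *
             (Θ j * (algebraMap K L ((zp (ζ ^ m) j)⁻¹) * θ - 1))) := by ring
      rw [e1, hΘd, hΘd, mul_one, mul_one]
      have e2 : (Θ i - algebraMap K L (zp (ζ ^ m) (i - j)) * Θ j) *
          ((algebraMap K L ((zp (ζ ^ m) i)⁻¹) * θ - 1) * (algebraMap K L ((zp (ζ ^ m) j)⁻¹) * θ - 1))
          = (Θ i * (algebraMap K L ((zp (ζ ^ m) i)⁻¹) * θ - 1)) *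
              (algebraMap K L ((zp (ζ ^ m) j)⁻¹) * θ - 1) -
            algebraMap K L (zp (ζ ^ m) (i - j)) *
              ((Θ j * (algebraMap K L ((zp (ζ ^ m) j)⁻¹) * θ - 1)) *
               (algebraMap K L ((zp (ζ ^ m) i)⁻¹) * θ - 1)) := by ring
      rw [e2, hΘd, hΘd, one_mul, one_mul]
      have hzz : zp (ζ ^ m) (i - j) * (zp (ζ ^ m) i)⁻¹ = (zp (ζ ^ m) j)⁻¹ := by
        have h3 : zp (ζ ^ m) (i - j) * zp (ζ ^ m) j = zp (ζ ^ m) i := by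
          rw [← zp_add hz1]; congr 1; ring
        have hzi := zp_ne hz0 i
        have hzj := zp_ne hz0 j
        field_simp
        linear_combination h3
      rw [mul_sub, ← mul_assoc, ← map_mul, hzz, mul_one]
      rw [map_sub, map_one]
      ring
    have h4 := congrArg (fun x => algebraMap K L ((zp (ζ ^ m) (i - j) - 1)⁻¹) * x) key
    rw [← mul_assoc, ← map_mul, inv_mul_cancel₀ ht1, map_one, one_mul] at h4
    rw [h4, mul_sub, ← mul_assoc, ← map_mul]
    rw [Algebra.smul_def, Algebra.smul_def, map_mul]
  -- repr of off-diagonal products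
  have hOffRepr : ∀ i j : ZMod n, i ≠ j → ∀ s : ZMod n,
      B.repr (Θ i * Θ j) s = (zp (ζ ^ m) (i - j) - 1)⁻¹ *
        ((if i = s then (1:K) else 0) - zp (ζ ^ m) (i - j) * (if j = s then (1:K) else 0)) := by
    intro i j hij s
    rw [hOff i j hij, ← hB i, ← hB j]
    rw [map_sub, map_smul, map_smul]
    simp only [Finsupp.sub_apply, Finsupp.smul_apply, Module.Basis.repr_self]
    rw [Finsupp.single_apply, Finsupp.single_apply]
    simp only [smul_eq_mul]
    ring
  -- diagonal terms via the Galois twist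
  have hDiag : ∀ i : ZMod n, ∀ s : ZMod n, B.repr (Θ i ^ 2) s = ii (s - i) := by
    intro i s
    have hzpn : ((zp (ζ ^ m) i)⁻¹) ^ n = 1 := by
      rw [inv_pow, zp_pow_n hz1, inv_one]
    obtain ⟨τ, hτθ⟩ := lift _ hzpn
    have hτd : ∀ s : ZMod n, τ (algebraMap K L ((zp (ζ ^ m) s)⁻¹) * θ - 1)
        = algebraMap K L ((zp (ζ ^ m) (s + i))⁻¹) * θ - 1 := by
      intro s
      rw [map_sub, map_mul, map_one, AlgHom.commutes, hτθ]
      rw [← mul_assoc, ← map_mul, ← mul_inv, ← zp_add hz1]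
    have hτΘ : ∀ s : ZMod n, τ (Θ s) = Θ (s + i) := by
      intro s
      rw [hΘ', hΘ', map_inv₀, hτd]
    have hsum : Θ 0 ^ 2 = ∑ s : ZMod n, (ii s) • B s := by
      rw [← B.sum_repr (Θ 0 ^ 2)]
      refine Finset.sum_congr rfl fun s _ => ?_
      rw [hii]
    have h2 : Θ i ^ 2 = ∑ s : ZMod n, (ii s) • B (s + i) := by
      have h5 : Θ i ^ 2 = τ (Θ 0 ^ 2) := by
        rw [map_pow, hτΘ, zero_add]
      rw [h5, hsum, map_sum]
      refine Finset.sum_congr rfl fun s _ => ?_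
      rw [map_smul, hB, hB, hτΘ]
    rw [h2, map_sum, Finsupp.coe_finset_sum, Finset.sum_apply]
    rw [Finset.sum_eq_single (s - i)]
    · rw [map_smul, Module.Basis.repr_self, Finsupp.smul_apply, sub_add_cancel,
        Finsupp.single_eq_same, smul_eq_mul, mul_one]
    · intro b _ hb
      rw [map_smul, Module.Basis.repr_self, Finsupp.smul_apply, Finsupp.single_apply]
      rw [if_neg (fun h => hb (by rw [← h]; ring)), smul_zero]
    · intro h
      exact absurd (Finset.mem_univ _) h
  -- denominators ζ z^k - 1 are nonzero
  have hUnit : ∀ s : ZMod n, ζ * zp (ζ ^ m) s - 1 ≠ 0 := by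
    intro s h
    have h0 : ζ * (ζ ^ m) ^ s.val = 1 := sub_eq_zero.mp h
    have h1 : ζ ^ (1 + m * s.val) = 1 := by
      rw [pow_add, pow_one, pow_mul]
      exact h0
    have h2 : m * n ∣ 1 + m * s.val := (hζ.pow_eq_one_iff_dvd _).mp h1
    have h3 : m ∣ 1 + m * s.val := dvd_trans (dvd_mul_right m n) h2
    have h4 : m ∣ 1 := (Nat.dvd_add_right (dvd_mul_right m s.val)).mp (by rwa [add_comm] at h3)
    have := Nat.le_of_dvd one_pos h4
    omega
  have huR' : ∀ s : ZMod n, uR s = (ζ * zp (ζ ^ m) s - 1)⁻¹ := huR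
  have hwR' : ∀ s : ZMod n, wR s = uR s * uR s := by
    intro s
    rw [hwR, huR, sq]
  -- field identity for off-diagonal uR products
  have hField : ∀ i j l : ZMod n, i ≠ j →
      (zp (ζ ^ m) (i - j) - 1)⁻¹ * (uR (l - i) - zp (ζ ^ m) (i - j) * uR (l - j))
        = uR (l - i) * uR (l - j) := by
    intro i j l hij
    have hij0 : i - j ≠ 0 := sub_ne_zero.mpr hij
    have ht1 : zp (ζ ^ m) (i - j) - 1 ≠ 0 := hzp_sub_ne _ hij0
    have h5 : zp (ζ ^ m) (i - j) * zp (ζ ^ m) (l - i) = zp (ζ ^ m) (l - j) := by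
      rw [← zp_add hz1]
      congr 1
      ring
    have hrel : zp (ζ ^ m) (i - j) * (ζ * zp (ζ ^ m) (l - i)) = ζ * zp (ζ ^ m) (l - j) := by
      rw [← h5]
      ring
    have hu : ζ * zp (ζ ^ m) (l - i) - 1 ≠ 0 := hUnit _
    have hv : ζ * zp (ζ ^ m) (l - j) - 1 ≠ 0 := hUnit _
    have hvu : (ζ * zp (ζ ^ m) (l - j) - 1) - zp (ζ ^ m) (i - j) * (ζ * zp (ζ ^ m) (l - i) - 1)
        = zp (ζ ^ m) (i - j) - 1 := by linear_combination -hrel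
    have key2 : uR (l - i) - zp (ζ ^ m) (i - j) * uR (l - j)
        = (zp (ζ ^ m) (i - j) - 1) * (uR (l - i) * uR (l - j)) := by
      rw [huR' (l - i), huR' (l - j), ← hvu]
      field_simp
    rw [key2, ← mul_assoc, inv_mul_cancel₀ ht1, one_mul]
  -- assemble: repr of the big product as a double sum
  have hf : ∀ s : ZMod n,
      B.repr ((∑ i : ZMod n, α i • Θ i) * (∑ j : ZMod n, β j • Θ j)) s
      = ∑ p ∈ Finset.univ ×ˢ (Finset.univ : Finset (ZMod n)),
          α p.1 * β p.2 * B.repr (Θ p.1 * Θ p.2) s := by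
    intro s
    have hprod : (∑ i : ZMod n, α i • Θ i) * (∑ j : ZMod n, β j • Θ j)
        = ∑ p ∈ Finset.univ ×ˢ (Finset.univ : Finset (ZMod n)),
            (α p.1 * β p.2) • (Θ p.1 * Θ p.2) := by
      rw [Finset.sum_mul_sum, Finset.sum_product]
      exact Finset.sum_congr rfl fun i _ => Finset.sum_congr rfl fun j _ =>
        smul_mul_smul_comm (α i) (Θ i) (β j) (Θ j)
    rw [hprod, map_sum, Finsupp.coe_finset_sum, Finset.sum_apply]
    exact Finset.sum_congr rfl fun q _ => by rw [map_smul, Finsupp.smul_apply, smul_eq_mul]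
  -- split into diagonal and off-diagonal parts
  set S : ZMod n → K := fun s => ∑ p ∈ (Finset.univ : Finset (ZMod n)).offDiag,
      α p.1 * β p.2 * B.repr (Θ p.1 * Θ p.2) s with hSdef
  have hsplit : ∀ s : ZMod n,
      B.repr ((∑ i : ZMod n, α i • Θ i) * (∑ j : ZMod n, β j • Θ j)) s
        = conv ii (α * β) s + S s := by
    intro s
    rw [hf s, ← Finset.diag_union_offDiag (Finset.univ : Finset (ZMod n)),
      Finset.sum_union (Finset.disjoint_diag_offDiag _)]
    congr 1
    rw [Finset.sum_diag, conv_comm]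
    show _ = ∑ i : ZMod n, (α * β) i * ii (s - i)
    refine Finset.sum_congr rfl fun i _ => ?_
    rw [Pi.mul_apply, ← sq, hDiag i s]
    try ring
  -- conv uR S computes the inner bracket
  have hconvS : conv uR S = conv uR α * conv uR β - conv wR (α * β) := by
    funext l
    have hL : conv uR S l = ∑ p ∈ (Finset.univ : Finset (ZMod n)).offDiag,
        α p.1 * β p.2 * (uR (l - p.1) * uR (l - p.2)) := by
      rw [conv_comm]
      show ∑ s : ZMod n, S s * uR (l - s) = _
      calc ∑ s : ZMod n, S s * uR (l - s)
          = ∑ s : ZMod n, ∑ p ∈ (Finset.univ : Finset (ZMod n)).offDiag,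
              α p.1 * β p.2 * B.repr (Θ p.1 * Θ p.2) s * uR (l - s) := by
            refine Finset.sum_congr rfl fun s _ => ?_
            rw [hSdef, Finset.sum_mul]
        _ = ∑ p ∈ (Finset.univ : Finset (ZMod n)).offDiag, ∑ s : ZMod n,
              α p.1 * β p.2 * B.repr (Θ p.1 * Θ p.2) s * uR (l - s) := Finset.sum_comm
        _ = ∑ p ∈ (Finset.univ : Finset (ZMod n)).offDiag,
              α p.1 * β p.2 * (uR (l - p.1) * uR (l - p.2)) := by
            refine Finset.sum_congr rfl fun q hq => ?_
            rw [Finset.mem_offDiag] at hq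
            have e1 : ∑ s : ZMod n, (if q.1 = s then (1:K) else 0) * uR (l - s)
                = uR (l - q.1) := by
              rw [Finset.sum_eq_single q.1]
              · rw [if_pos rfl, one_mul]
              · intro b _ hb
                rw [if_neg (fun h => hb h.symm), zero_mul]
              · intro h; exact absurd (Finset.mem_univ _) h
            have e2 : ∑ s : ZMod n, (if q.2 = s then (1:K) else 0) * uR (l - s)
                = uR (l - q.2) := by
              rw [Finset.sum_eq_single q.2]
              · rw [if_pos rfl, one_mul]
              · intro b _ hb
                rw [if_neg (fun h => hb h.symm), zero_mul]
              · intro h; exact absurd (Finset.mem_univ _) h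
            have estep : ∀ s : ZMod n,
                α q.1 * β q.2 * B.repr (Θ q.1 * Θ q.2) s * uR (l - s)
                = (α q.1 * β q.2 * (zp (ζ ^ m) (q.1 - q.2) - 1)⁻¹) *
                    ((if q.1 = s then (1:K) else 0) * uR (l - s))
                  - (α q.1 * β q.2 * (zp (ζ ^ m) (q.1 - q.2) - 1)⁻¹ * zp (ζ ^ m) (q.1 - q.2)) *
                    ((if q.2 = s then (1:K) else 0) * uR (l - s)) := by
              intro s
              rw [hOffRepr q.1 q.2 hq.2.2 s]
              ring
            rw [Finset.sum_congr rfl (fun s _ => estep s), Finset.sum_sub_distrib,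
              ← Finset.mul_sum, ← Finset.mul_sum, e1, e2]
            linear_combination (α q.1 * β q.2) * hField q.1 q.2 l hq.2.2
    have hR : (conv uR α * conv uR β - conv wR (α * β)) l
        = ∑ p ∈ Finset.univ ×ˢ (Finset.univ : Finset (ZMod n)),
            α p.1 * β p.2 * (uR (l - p.1) * uR (l - p.2))
          - ∑ i : ZMod n, α i * β i * (uR (l - i) * uR (l - i)) := by
      rw [Pi.sub_apply, Pi.mul_apply]
      congr 1
      · rw [conv_comm uR α, conv_comm uR β]
        show (∑ i : ZMod n, α i * uR (l - i)) * (∑ j : ZMod n, β j * uR (l - j)) = _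
        rw [Finset.sum_mul_sum, Finset.sum_product]
        exact Finset.sum_congr rfl fun i _ => Finset.sum_congr rfl fun j _ => by ring
      · rw [conv_comm]
        show ∑ i : ZMod n, (α * β) i * wR (l - i) = _
        refine Finset.sum_congr rfl fun i _ => ?_
        rw [Pi.mul_apply, hwR' (l - i)]
        try ring
    rw [hL, hR, ← Finset.diag_union_offDiag (Finset.univ : Finset (ZMod n)),
      Finset.sum_union (Finset.disjoint_diag_offDiag _), Finset.sum_diag]
    ring
  have hS_eq : S = conv uRinv (conv uR α * conv uR β - conv wR (α * β)) := by
    rw [← hconvS]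
    exact (conv_inv_cancel huRinv S).symm
  rw [hsplit k, hS_eq]


lemma irred_aux {K : Type*} [Field K] {n : ℕ} (hn : 0 < n) (a : K) (ha0 : a ≠ 0)
    (ha : ∀ r : ℕ, 0 < r → r < n → ¬ ∃ x : K, x ^ n = a ^ r) :
    Irreducible (X ^ n - C a : K[X]) := by
  have hne : (X ^ n - C a : K[X]) ≠ 0 := X_pow_sub_C_ne_zero hn a
  have hdeg : (X ^ n - C a : K[X]).natDegree = n := natDegree_X_pow_sub_C
  have hnotunit : ¬ IsUnit (X ^ n - C a : K[X]) := by
    intro h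
    have := natDegree_eq_zero_of_isUnit h
    omega
  obtain ⟨q0, hq0irr, hq0dvd⟩ := WfDvdMonoid.exists_irreducible_factor hnotunit hne
  set q : K[X] := q0 * C (q0.leadingCoeff)⁻¹ with hq
  have hassoc : Associated q0 q := by
    apply associated_mul_unit_right
    exact isUnit_C.mpr (IsUnit.inv (isUnit_iff_ne_zero.mpr (leadingCoeff_ne_zero.mpr hq0irr.ne_zero)))
  have hqirr : Irreducible q := hassoc.irreducible hq0irr
  have hqdvd : q ∣ X ^ n - C a := hassoc.symm.dvd.trans hq0dvd
  have hqmonic : q.Monic := monic_mul_leadingCoeff_inv hq0irr.ne_zero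
  set d := q.natDegree with hd
  have hdpos : 0 < d := hqirr.natDegree_pos
  have hdn : d ≤ n := hdeg ▸ natDegree_le_of_dvd hqdvd hne
  -- work in the algebraic closure
  let Ω := AlgebraicClosure K
  let φ := algebraMap K Ω
  have hsplits : Splits (q.map φ) := IsAlgClosed.splits _
  have hcard : (q.map φ).roots.card = d := by rw [← hsplits.natDegree_eq_card_roots, natDegree_map]
  have hprodpow : ((q.map φ).roots.prod) ^ n = (φ a) ^ d := by
    have hpp : (q.map φ).roots.prod ^ n = (Multiset.map (fun r => r ^ n) (q.map φ).roots).prod := by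
      rw [Multiset.prod_map_pow]
      simp
    rw [hpp]
    have : ∀ r ∈ (q.map φ).roots, r ^ n = φ a := by
      intro r hr
      have hroot : IsRoot (q.map φ) r := (mem_roots (by
        exact (Polynomial.map_ne_zero_iff (algebraMap K Ω).injective).mpr hqirr.ne_zero)).mp hr
      have hdvd2 : q.map φ ∣ (X ^ n - C a : K[X]).map φ := Polynomial.map_dvd φ hqdvd
      have : ((X ^ n - C a : K[X]).map φ).eval r = 0 :=
        eval_eq_zero_of_dvd_of_eval_eq_zero hdvd2 hroot
      simpa [sub_eq_zero] using this
    rw [Multiset.map_congr rfl this, Multiset.map_const', Multiset.prod_replicate, hcard]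
  have hc0 : φ ((-1) ^ d * q.coeff 0) = (q.map φ).roots.prod := by
    have hqm : q.map φ = (Multiset.map (fun r => X - C r) (q.map φ).roots).prod :=
      hsplits.eq_prod_roots_of_monic (hqmonic.map φ)
    have : (q.map φ).coeff 0 = (-1) ^ d * (q.map φ).roots.prod := by
      rw [coeff_zero_eq_eval_zero, hqm]
      rw [eval_multiset_prod]
      simp only [Multiset.map_map, Function.comp, eval_sub, eval_X, eval_C, zero_sub]
      rw [Multiset.prod_map_neg, hcard]
      simp
    rw [map_mul, map_pow, map_neg, map_one, ← coeff_map, this]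
    rw [← mul_assoc, ← pow_add, ← two_mul, pow_mul]
    norm_num
  have hcn : ((-1 : K) ^ d * q.coeff 0) ^ n = a ^ d := by
    apply (algebraMap K Ω).injective
    rw [map_pow, hc0, hprodpow, map_pow]
  have hdeq : d = n := by
    rcases lt_or_eq_of_le hdn with h | h
    · exact absurd ⟨_, hcn⟩ (ha d hdpos h)
    · exact h
  have : Associated q (X ^ n - C a : K[X]) :=
    associated_of_dvd_of_natDegree_le hqdvd hne (by omega)
  exact this.irreducible hqirr


/-- FFT-like multiplication formula in the Kummer normal basis
`θ_k = 1/(ζ^{-k} θ - 1)`: with `R = ζ_{mn}`, the coordinate vector of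
`(Σ α_i θ_i)(Σ β_j θ_j)` equals
`ī ⋆ (α ⋄ β) + u_R⁻¹ ⋆ ((u_R ⋆ α) ⋄ (u_R ⋆ β) - w_R ⋆ (α ⋄ β))`. -/
theorem stmt_9 (K : Type*) [Field K] (p : ℕ) (hp : 0 < p) [CharP K p]
    (m n : ℕ) [NeZero n] (hm : 2 ≤ m) (hn : 2 ≤ n) (hcop : Nat.Coprime (m * n) p)
    (ζ : K) (hζ : IsPrimitiveRoot ζ (m * n))
    (a : K) (ha0 : a ≠ 0)
    (ha : ∀ r : ℕ, 0 < r → r < n → ¬ ∃ x : K, x ^ n = a ^ r) :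
    ∃ hirr : Irreducible (X ^ n - C a : K[X]),
      letI : Fact (Irreducible (X ^ n - C a : K[X])) := ⟨hirr⟩
      ∀ Θ : ZMod n → AdjoinRoot (X ^ n - C a : K[X]),
        (∀ k : ZMod n, Θ k =
          (algebraMap K (AdjoinRoot (X ^ n - C a : K[X])) (((ζ ^ m)⁻¹) ^ k.val) *
              AdjoinRoot.root (X ^ n - C a : K[X]) - 1)⁻¹) →
        ∀ B : Module.Basis (ZMod n) K (AdjoinRoot (X ^ n - C a : K[X])),
          (∀ k : ZMod n, B k = Θ k) →
          ∀ ii : ZMod n → K, (∀ k : ZMod n, ii k = B.repr (Θ 0 ^ 2) k) →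
          ∀ uR wR : ZMod n → K,
            (∀ k : ZMod n, uR k = (ζ * (ζ ^ m) ^ k.val - 1)⁻¹) →
            (∀ k : ZMod n, wR k = (ζ * (ζ ^ m) ^ k.val - 1)⁻¹ ^ 2) →
            ∀ uRinv : ZMod n → K,
              conv uR uRinv = (fun k => if k = 0 then 1 else 0) →
              ∀ α β : ZMod n → K, ∀ k : ZMod n,
                B.repr ((∑ i : ZMod n, α i • Θ i) * (∑ j : ZMod n, β j • Θ j)) k =
                  conv ii (α * β) k +
                    conv uRinv
                      (conv uR α * conv uR β - conv wR (α * β)) k := by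
  have hn0 : 0 < n := by omega
  have hirr := irred_aux hn0 a ha0 ha
  refine ⟨hirr, ?_⟩
  haveI : Fact (Irreducible (X ^ n - C a : K[X])) := ⟨hirr⟩
  intro Θ hΘ B hB ii hii uR wR huR hwR uRinv huRinv α β k
  refine core hm hn hζ (a := a) (AdjoinRoot.root (X ^ n - C a : K[X])) ?_ ?_ ?_
    Θ hΘ B hB ii hii uR wR huR hwR uRinv huRinv α β k
  · rw [AdjoinRoot.algebraMap_eq]
    exact root_X_pow_sub_C_pow n a
  · intro w hw
    have hne : (X ^ n - C a : K[X]) ≠ 0 := X_pow_sub_C_ne_zero hn0 a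
    have h1 : minpoly K (AdjoinRoot.root (X ^ n - C a : K[X])) = X ^ n - C a := by
      rw [AdjoinRoot.minpoly_root hne, (monic_X_pow_sub_C a hn0.ne').leadingCoeff]
      simp
    rw [hw, minpoly.eq_X_sub_C] at h1
    have h2 := congrArg natDegree h1
    rw [natDegree_X_sub_C, natDegree_X_pow_sub_C] at h2
    omega
  · intro c hc
    have haeval : (aeval (algebraMap K (AdjoinRoot (X ^ n - C a : K[X])) c *
        AdjoinRoot.root (X ^ n - C a : K[X]))) (X ^ n - C a : K[X]) = 0 := by
      rw [map_sub, map_pow, aeval_X, aeval_C, mul_pow, ← map_pow, hc, map_one, one_mul,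
        AdjoinRoot.algebraMap_eq, root_X_pow_sub_C_pow, sub_self]
    exact ⟨AdjoinRoot.liftAlgHom _ (Algebra.ofId _ _) _ haeval,
      AdjoinRoot.liftAlgHom_root _ (Algebra.ofId _ _) _ haeval⟩
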